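/- arXiv:2204.07013 — 2 statements merged into one kernel-verified Lean document; each statement's English description precedes it below -/
import Mathlib

section
/- For integers r ≥ 2 and k ≥ 2, h_{k,r}(r - 1/k) ≤ 0. Consequently h_{k,r} has a real root in the open interval (r - 1/k, r). -/
noncomputable def h (r k : ℕ) (z : ℝ) : ℝ := z ^ k - ∑ i ∈ Finset.range k, ((r : ℝ) - 1) * z ^ i

theorem stmt2 (r k : ℕ) (hr : 2 ≤ r) (hk : 2 ≤ k) :
    h r k ((r : ℝ) - 1 / k) ≤ 0 ∧
      ∃ z ∈ Set.Ioo ((r : ℝ) - 1 / k) (r : ℝ), h r k z = 0 := by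
  have hr2 : (2:ℝ) ≤ r := by exact_mod_cast hr
  have hk2 : (2:ℝ) ≤ k := by exact_mod_cast hk
  have hkpos : (0:ℝ) < k := by linarith
  have hrpos : (0:ℝ) < r := by linarith
  set z : ℝ := (r:ℝ) - 1/k with hz
  clear_value z
  have hz1 : (1:ℝ) < z := by
    have : 1/(k:ℝ) ≤ 1/2 := by
      apply one_div_le_one_div_of_le <;> linarith
    simp only [hz]; linarith
  -- key: k*(r-1) < z^k
  have key : (k:ℝ) * ((r:ℝ) - 1) < z ^ k := by
    have hs : z = (r:ℝ) * (1 + (-(1/((r:ℝ)*k)))) := by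
      rw [hz]; field_simp; ring
    have hsne : (-(1/((r:ℝ)*k))) ≠ 0 := neg_ne_zero.mpr (by positivity)
    have hs1 : (-1:ℝ) ≤ -(1/((r:ℝ)*k)) := by
      have h1 : 1/((r:ℝ)*k) ≤ 1 := by
        rw [div_le_one (by positivity)]; nlinarith
      linarith
    have hbern := one_add_mul_self_lt_rpow_one_add hs1 hsne (p := (k:ℝ)) (by linarith)
    have hpos1 : (0:ℝ) < 1 + (-(1/((r:ℝ)*k))) := by
      have : 1/((r:ℝ)*k) < 1 := by
        rw [div_lt_one (by positivity)]; nlinarith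
      linarith
    rw [Real.rpow_natCast] at hbern
    have hbern' : 1 + (k:ℝ) * (-(1/((r:ℝ)*k))) < (1 + (-(1/((r:ℝ)*k)))) ^ k := by
      exact_mod_cast hbern
    have h2 : (r:ℝ)^k * (1 + (k:ℝ) * (-(1/((r:ℝ)*k)))) < (r:ℝ)^k * (1 + (-(1/((r:ℝ)*k))))^k := by
      apply mul_lt_mul_of_pos_left hbern' (by positivity)
    have h3 : (r:ℝ)^k * (1 + (-(1/((r:ℝ)*k))))^k = z^k := by
      rw [hs, mul_pow]
    have h4 : (r:ℝ)^k * (1 + (k:ℝ) * (-(1/((r:ℝ)*k)))) = (r:ℝ)^(k-1) * ((r:ℝ) - 1) := by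
      have hke : k = (k-1) + 1 := by omega
      rw [hke]
      push_cast
      field_simp
      ring
    have h5 : (k:ℝ) ≤ (r:ℝ)^(k-1) := by
      have : k ≤ 2^(k-1) := by
        have := @Nat.lt_two_pow_self (k-1)
        omega
      calc (k:ℝ) ≤ (2:ℝ)^(k-1) := by exact_mod_cast this
        _ ≤ (r:ℝ)^(k-1) := by apply pow_le_pow_left₀ (by norm_num) hr2
    nlinarith [pow_pos (by linarith : (0:ℝ) < z) k]
  -- h z < 0
  have hzne : z ≠ 1 := ne_of_gt hz1
  have hsum : ∑ i ∈ Finset.range k, z ^ i = (z^k - 1)/(z - 1) := by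
    rw [geom_sum_eq hzne]
  have hhz : h r k z < 0 := by
    unfold h
    rw [← Finset.mul_sum, hsum]
    rw [sub_neg, ← mul_div_assoc, lt_div_iff₀ (by linarith : (0:ℝ) < z - 1)]
    have hlt : (r:ℝ) - 1 < z^k * (1/k) := by
      rw [mul_one_div]
      exact (lt_div_iff₀ hkpos).mpr (by linarith)
    have hzr2 : z - (r:ℝ) = -(1/k) := by rw [hz]; ring
    have hid : z^k*(z-1) = z^k*(z-(r:ℝ)) + ((r:ℝ)-1)*z^k := by ring
    have hid2 : z^k*(z-(r:ℝ)) = -(z^k*(1/(k:ℝ))) := by rw [hzr2]; ring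
    nlinarith [hlt, hid, hid2]
  -- h r = 1
  have hr1 : (r:ℝ) ≠ 1 := by intro hx; rw [hx] at hr2; linarith
  have hhr : h r k (r:ℝ) = 1 := by
    unfold h
    rw [← Finset.mul_sum, geom_sum_eq hr1, mul_comm,
      div_mul_cancel₀ ((r:ℝ)^k-1) (sub_ne_zero.mpr hr1)]
    ring
  have hab : z < (r:ℝ) := by
    simp only [hz]; have : 0 < 1/(k:ℝ) := by positivity
    linarith
  have hcont : ContinuousOn (h r k) (Set.Icc z (r:ℝ)) := by
    apply Continuous.continuousOn
    unfold h
    continuity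
  have := intermediate_value_Ioo (le_of_lt hab) hcont
  have h0 : (0:ℝ) ∈ Set.Ioo (h r k z) (h r k (r:ℝ)) := by
    rw [hhr]; exact ⟨hhz, by norm_num⟩
  obtain ⟨x, hx, hfx⟩ := this h0
  exact ⟨le_of_lt hhz, x, hx, hfx⟩
end

section
/- For integers r ≥ 2 and k ≥ 3 and any real z ≥ r - 1/k with z ≥ 3/2, one has z^k + k·z^{k-1}(z - r) ≥ z^k - z^{k-1} > 1. Consequently, h_{k,r} is strictly increasing on [λ_k, ∞), where λ_k > r - 1/k is the maximal real root of h_{k,r}. -/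
private lemma h_div (r n : ℕ) (z : ℝ) (hz : z ≠ 1) :
    h r (n+3) z = (z ^ (n+4) - r * z ^ (n+3) + ((r:ℝ) - 1)) / (z - 1) := by
  have hz' : z - 1 ≠ 0 := sub_ne_zero.mpr hz
  unfold h
  rw [← Finset.mul_sum, geom_sum_eq hz]
  field_simp
  ring

private lemma aux_key (r n : ℕ) (hr : 2 ≤ r) (z : ℝ)
    (hz1 : (r : ℝ) - 1 / ((n:ℝ)+3) ≤ z) (hz2 : (3:ℝ)/2 ≤ z) :
    z ^ (n+3) - z ^ (n+2) ≤ z ^ (n+3) + ((n:ℝ)+3) * z ^ (n+2) * (z - r) ∧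
      1 < z ^ (n+3) - z ^ (n+2) := by
  have hn0 : (0:ℝ) ≤ n := Nat.cast_nonneg n
  have h3 : (0:ℝ) < (n:ℝ)+3 := by positivity
  have hz0 : (0:ℝ) < z := by linarith
  have hp : (0:ℝ) < z ^ (n+2) := pow_pos hz0 _
  have h4 : ((n:ℝ)+3) * (1/((n:ℝ)+3)) = 1 := by field_simp
  have hz1' : ((n:ℝ)+3) * (r:ℝ) - 1 ≤ ((n:ℝ)+3) * z := by
    nlinarith [mul_le_mul_of_nonneg_left hz1 h3.le]
  have h94 : (9:ℝ)/4 ≤ z ^ (n+2) := by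
    calc (9:ℝ)/4 = (3/2:ℝ)^2 := by norm_num
    _ ≤ (3/2:ℝ)^(n+2) := pow_le_pow_right₀ (by norm_num) (by omega)
    _ ≤ z ^ (n+2) := pow_le_pow_left₀ (by norm_num) hz2 _
  constructor
  · nlinarith [mul_le_mul_of_nonneg_left hz1' hp.le]
  · nlinarith [mul_le_mul h94 (show (1:ℝ)/2 ≤ z - 1 by linarith) (by norm_num) (by positivity),
      pow_succ z (n+2)]

set_option maxHeartbeats 1600000 in
private lemma aux_mono (r n : ℕ) (hr : 2 ≤ r) (lam : ℝ)
    (hroot : h r (n+3) lam = 0) (hgt : (r:ℝ) - 1/((n:ℝ)+3) < lam) :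
    StrictMonoOn (h r (n+3)) (Set.Ici lam) := by
  have hrR : (2:ℝ) ≤ r := by exact_mod_cast hr
  have hn0 : (0:ℝ) ≤ n := Nat.cast_nonneg n
  have h3 : (0:ℝ) < (n:ℝ)+3 := by positivity
  have h4 : ((n:ℝ)+3) * (1/((n:ℝ)+3)) = 1 := by field_simp
  have hgt' : ((n:ℝ)+3) * (r:ℝ) - 1 < ((n:ℝ)+3) * lam := by
    nlinarith [mul_lt_mul_of_pos_left hgt h3]
  have hlam53 : (5:ℝ)/3 < lam := by nlinarith
  have hlam1 : (1:ℝ) < lam := by linarith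
  have hlamne : lam ≠ 1 := ne_of_gt hlam1
  -- derivative facts for U t = t^(n+4) - r t^(n+3) + (r-1)
  have hU : ∀ t : ℝ, HasDerivAt (fun t : ℝ => t^(n+4) - r * t^(n+3) + ((r:ℝ)-1))
      (((n:ℝ)+4) * t^(n+3) - (r:ℝ) * (((n:ℝ)+3) * t^(n+2))) t := by
    intro t
    have h1 := hasDerivAt_pow (n+4) t
    have h2 := hasDerivAt_pow (n+3) t
    have e1 : n + 4 - 1 = n + 3 := by omega
    have e2 : n + 3 - 1 = n + 2 := by omega
    rw [e1] at h1; rw [e2] at h2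
    have := (h1.sub (h2.const_mul (r:ℝ))).add_const ((r:ℝ)-1)
    refine this.congr_deriv ?_
    push_cast
    ring
  have hU' : ∀ t : ℝ, HasDerivAt
      (fun t : ℝ => ((n:ℝ)+4) * t^(n+3) - (r:ℝ) * (((n:ℝ)+3) * t^(n+2)))
      (((n:ℝ)+4) * (((n:ℝ)+3) * t^(n+2)) - (r:ℝ) * (((n:ℝ)+3) * (((n:ℝ)+2) * t^(n+1)))) t := by
    intro t
    have h1 := (hasDerivAt_pow (n+3) t).const_mul ((n:ℝ)+4)
    have h2 := ((hasDerivAt_pow (n+2) t).const_mul ((n:ℝ)+3)).const_mul (r:ℝ)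
    have e1 : n + 3 - 1 = n + 2 := by omega
    have e2 : n + 2 - 1 = n + 1 := by omega
    rw [e1] at h1; rw [e2] at h2
    refine (h1.sub h2).congr_deriv ?_
    push_cast
    ring
  have hU'pos : ∀ z : ℝ, lam ≤ z →
      1 < ((n:ℝ)+4) * z^(n+3) - (r:ℝ) * (((n:ℝ)+3) * z^(n+2)) := by
    intro z hz
    have hk := aux_key r n hr z (by linarith) (by linarith)
    nlinarith [hk.1, hk.2, pow_succ z (n+2)]
  have hU'mono : MonotoneOn
      (fun t : ℝ => ((n:ℝ)+4) * t^(n+3) - (r:ℝ) * (((n:ℝ)+3) * t^(n+2))) (Set.Ici lam) := by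
    apply monotoneOn_of_deriv_nonneg (convex_Ici lam) (Continuous.continuousOn (by fun_prop))
    · intro t ht
      exact (hU' t).differentiableAt.differentiableWithinAt
    · intro t ht
      rw [interior_Ici] at ht
      rw [(hU' t).deriv]
      have ht1 : lam < t := ht
      have ht0 : (0:ℝ) < t := by linarith
      have hgt'' : ((n:ℝ)+3) * (r:ℝ) - 1 < ((n:ℝ)+3) * t := by nlinarith
      have hlin : (0:ℝ) ≤ ((n:ℝ)+4) * t - (r:ℝ) * ((n:ℝ)+2) := by nlinarith
      have hfact : 0 ≤ ((n:ℝ)+3) * t^(n+1) * (((n:ℝ)+4)*t - (r:ℝ)*((n:ℝ)+2)) :=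
        mul_nonneg (mul_nonneg h3.le (pow_pos ht0 (n+1)).le) hlin
      have e : t^(n+2) = t^(n+1) * t := pow_succ t (n+1)
      rw [e]
      nlinarith [hfact]
  have hUlam : lam^(n+4) - (r:ℝ)*lam^(n+3) + ((r:ℝ)-1) = 0 := by
    have h0 := h_div r n lam hlamne
    rw [hroot] at h0
    have hne : lam - 1 ≠ 0 := sub_ne_zero.mpr hlamne
    field_simp at h0
    linarith
  have key : StrictMonoOn
      (fun z : ℝ => (z^(n+4) - (r:ℝ)*z^(n+3) + ((r:ℝ)-1))/(z-1)) (Set.Ici lam) := by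
    apply strictMonoOn_of_deriv_pos (convex_Ici lam)
    · apply ContinuousOn.div (Continuous.continuousOn (by fun_prop))
        (Continuous.continuousOn (by fun_prop))
      intro z hz
      have : lam ≤ z := hz
      have : (1:ℝ) < z := by linarith
      exact sub_ne_zero.mpr (ne_of_gt this)
    · intro z hz
      rw [interior_Ici] at hz
      have hlz : lam < z := hz
      have hz1 : (1:ℝ) < z := by linarith
      have hzne : z - 1 ≠ 0 := sub_ne_zero.mpr (ne_of_gt hz1)
      have hd : HasDerivAt (fun z : ℝ => (z^(n+4) - (r:ℝ)*z^(n+3) + ((r:ℝ)-1))/(z-1))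
          (((((n:ℝ)+4) * z^(n+3) - (r:ℝ) * (((n:ℝ)+3) * z^(n+2))) * (z-1)
            - (z^(n+4) - (r:ℝ)*z^(n+3) + ((r:ℝ)-1)) * 1)/(z-1)^2 ) z :=
        (hU z).div ((hasDerivAt_id z).sub_const 1) hzne
      rw [hd.deriv]
      apply div_pos _ (by positivity)
      obtain ⟨c, hc, hceq⟩ := exists_hasDerivAt_eq_slope
        (fun t : ℝ => t^(n+4) - (r:ℝ) * t^(n+3) + ((r:ℝ)-1))
        (fun t : ℝ => ((n:ℝ)+4) * t^(n+3) - (r:ℝ) * (((n:ℝ)+3) * t^(n+2)))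
        hlz (Continuous.continuousOn (by fun_prop)) (fun t _ => hU t)
      have hzl0 : z - lam ≠ 0 := sub_ne_zero.mpr (ne_of_gt hlz)
      rw [eq_div_iff hzl0] at hceq
      have hcz : ((n:ℝ)+4) * c^(n+3) - (r:ℝ) * (((n:ℝ)+3) * c^(n+2))
          ≤ ((n:ℝ)+4) * z^(n+3) - (r:ℝ) * (((n:ℝ)+3) * z^(n+2)) :=
        hU'mono (Set.mem_Ici.mpr hc.1.le) (Set.mem_Ici.mpr hlz.le) hc.2.le
      have h1z := hU'pos z hlz.le
      have e1 : 0 ≤ ((((n:ℝ)+4) * z^(n+3) - (r:ℝ) * (((n:ℝ)+3) * z^(n+2)))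
          - (((n:ℝ)+4) * c^(n+3) - (r:ℝ) * (((n:ℝ)+3) * c^(n+2)))) * (z - lam) :=
        mul_nonneg (sub_nonneg.mpr hcz) (sub_pos.mpr hlz).le
      have e2 : 0 < (((n:ℝ)+4) * z^(n+3) - (r:ℝ) * (((n:ℝ)+3) * z^(n+2))) * (lam - 1) :=
        mul_pos (by linarith) (by linarith)
      nlinarith [e1, e2, hceq, hUlam]
  intro a ha b hb hab
  have ha1 : a ≠ 1 := by
    have : lam ≤ a := ha
    exact ne_of_gt (by linarith : (1:ℝ) < a)
  have hb1 : b ≠ 1 := by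
    have : lam ≤ b := hb
    exact ne_of_gt (by linarith : (1:ℝ) < b)
  rw [h_div r n a ha1, h_div r n b hb1]
  exact key ha hb hab

theorem stmt7 (r k : ℕ) (hr : 2 ≤ r) (hk : 3 ≤ k) :
    (∀ z : ℝ, (r : ℝ) - 1 / k ≤ z → (3 : ℝ) / 2 ≤ z →
      z ^ k - z ^ (k - 1) ≤ z ^ k + k * z ^ (k - 1) * (z - r) ∧
        1 < z ^ k - z ^ (k - 1)) ∧
      (∀ lam : ℝ, IsGreatest {z : ℝ | h r k z = 0} lam → (r : ℝ) - 1 / k < lam →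
        StrictMonoOn (h r k) (Set.Ici lam)) := by
  obtain ⟨n, rfl⟩ : ∃ n, k = n + 3 := ⟨k - 3, by omega⟩
  constructor
  · intro z hz1 hz2
    have e : n + 3 - 1 = n + 2 := by omega
    rw [e]
    push_cast at hz1 ⊢
    have hk' := aux_key r n hr z hz1 hz2
    exact ⟨by linarith [hk'.1], hk'.2⟩
  · intro lam hlam hgt
    push_cast at hgt
    exact aux_mono r n hr lam hlam.1 hgt
end
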